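/- Let κ be a regular infinite cardinal, let Y = {F_{ξ,ζ} : ξ < κ, ζ < κ} be a stratified set of nonprincipal ultrafilters on κ, let {D_t : t ∈ [κ]^{<ω}} be a partition of κ, let W = {F_{ξ,ζ} ∈ Y : D_t ∈ F_{ξ,ζ} for some t ∈ [κ]^{<ω}}, and let W(γ) (γ < κ⁺) and W̃ be defined from W as below. Then every F_{ξ,ζ} ∈ W̃ ∖ W(1) belongs to the topological closure of W(1) ∖ W in βκ. -/

import Mathlib

noncomputable section

open Cardinal Set

namespace RFNote

variable {K : Type}

/-- A `κ`-indexed family of ultrafilters on `κ` is *`κ`-discrete* iff there is a partition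
`{A a : a ∈ κ}` of `κ` with `A a ∈ X a` for every `a`. -/
def KDiscrete (X : K → Ultrafilter K) : Prop :=
  ∃ A : K → Set K, (Pairwise fun a b => Disjoint (A a) (A b)) ∧
    (⋃ a, A a) = Set.univ ∧ ∀ a, A a ∈ X a

/-- `Σ(X, F) = {A ⊆ κ : {a : A ∈ X a} ∈ F}`, the sum of the family `X` along `F`. -/
def SigmaU (X : K → Ultrafilter K) (F : Ultrafilter K) : Ultrafilter K := F.bind X

/-- The Rudin–Frolík (pre)order: `F ≤_RF G` iff `G = Σ(X, F)` for some `κ`-discrete `X`. -/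
def RFle (F G : Ultrafilter K) : Prop :=
  ∃ X : K → Ultrafilter K, KDiscrete X ∧ G = SigmaU X F

/-- `F =_RF G` iff `F ≤_RF G` and `G ≤_RF F`. -/
def RFeq (F G : Ultrafilter K) : Prop := RFle F G ∧ RFle G F

/-- `F <_RF G` iff `F ≤_RF G` and not `F =_RF G`. -/
def RFlt (F G : Ultrafilter K) : Prop := RFle F G ∧ ¬ RFeq F G

/-- An ultrafilter is nonprincipal iff it is not of the form `pure a`. -/
def NonPrincipal (F : Ultrafilter K) : Prop := ∀ a : K, F ≠ pure a

/-- A nonprincipal ultrafilter is minimal in the Rudin–Frolík order iff no nonprincipal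
ultrafilter lies strictly below it. -/
def RFMinimal (F : Ultrafilter K) : Prop :=
  NonPrincipal F ∧ ¬ ∃ G : Ultrafilter K, NonPrincipal G ∧ RFlt G F

/-- `Ω(Z, G) = F`: there is a `κ`-discrete enumeration `X` of the set `Z` with `Σ(X, F) = G`. -/
def OmegaEq (Z : Set (Ultrafilter K)) (G F : Ultrafilter K) : Prop :=
  ∃ X : K → Ultrafilter K, KDiscrete X ∧ Set.range X = Z ∧ SigmaU X F = G

/-- The type of an ultrafilter: its orbit under self-homeomorphisms of `βκ`. -/
def UType (G : Ultrafilter K) : Set (Ultrafilter K) :=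
  {H | ∃ e : Ultrafilter K ≃ₜ Ultrafilter K, e G = H}

/-- A partition of `κ` indexed by the finite subsets of `κ`. -/
def IsPartitionFin (D : Finset K → Set K) : Prop :=
  (Pairwise fun s t => Disjoint (D s) (D t)) ∧ (⋃ t, D t) = Set.univ

/-- `φ : [κ⁺]^{<ω} → [κ]^{<ω}` is `κ`-shrinking iff it is monotone and sends `∅` to `∅`.
Here `L` is a set of cardinality `κ⁺`. -/
def Shrinking {L : Type} (φ : Finset L → Finset K) : Prop :=
  (∀ p q : Finset L, p ⊆ q → φ p ⊆ φ q) ∧ φ (∅ : Finset L) = (∅ : Finset K)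

/-- A stratified set of filters `{F ξ ζ : ξ < τo, ζ < κo}` (indexed by ordinals). -/
def Stratified (τo κo : Ordinal.{0}) (F : Ordinal.{0} → Ordinal.{0} → Ultrafilter K) : Prop :=
  (∀ ξ < τo, ∃ A : Ordinal.{0} → Set K,
      (∀ ζ < κo, ∀ ζ' < κo, ζ ≠ ζ' → Disjoint (A ζ) (A ζ')) ∧
      (⋃ ζ ∈ Set.Iio κo, A ζ) = Set.univ ∧
      ∀ ζ < κo, A ζ ∈ F ξ ζ) ∧
  (∀ ξ ν : Ordinal.{0}, ξ < ν → ν < τo → ∀ ζ < κo, ∀ S : Set K, S ∈ F ξ ζ →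
      Cardinal.mk {μ : Ordinal.{0} // μ < κo ∧ S ∈ F ν μ} = Cardinal.lift.{1} (Cardinal.mk K))

/-- The transfinite iteration `W(γ)` of 2.7: `W(0) = W₀`, unions at limits, and
`W(γ+1) = W(γ) ∪ {F ξ ζ : ∃ η > γ, ∃ A ∈ F ξ ζ, {F η ν : A ∈ F η ν} ⊆ W(γ)}`. -/
def WIter (τo κo : Ordinal.{0}) (F : Ordinal.{0} → Ordinal.{0} → Ultrafilter K)
    (W0 : Set (Ultrafilter K)) : Ordinal.{0} → Set (Ultrafilter K) := fun γ =>
  Ordinal.limitRecOn γ W0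
    (fun δ ih => ih ∪ {G : Ultrafilter K | (∃ ξ < τo, ∃ ζ < κo, G = F ξ ζ) ∧
        ∃ η : Ordinal.{0}, δ < η ∧ η < τo ∧ ∃ A ∈ G,
          {H : Ultrafilter K | ∃ ν < κo, H = F η ν ∧ A ∈ F η ν} ⊆ ih})
    (fun γ' _ ih => ⋃ β : Ordinal.{0}, ⋃ h : β < γ', ih β h)

/-- `W̃ = ⋃_{γ < κ⁺} W(γ)`. -/
def Wtilde (τo κo : Ordinal.{0}) (F : Ordinal.{0} → Ordinal.{0} → Ultrafilter K)
    (W0 : Set (Ultrafilter K)) : Set (Ultrafilter K) :=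
  ⋃ γ : Ordinal.{0}, ⋃ _ : γ < (Order.succ (Cardinal.mk K)).ord, WIter τo κo F W0 γ

/-- The set `W = {F ξ ζ : D t ∈ F ξ ζ for some t ∈ [κ]^{<ω}}` determined by a partition `D`. -/
def Wzero (τo κo : Ordinal.{0}) (F : Ordinal.{0} → Ordinal.{0} → Ultrafilter K)
    (D : Finset K → Set K) : Set (Ultrafilter K) :=
  {G : Ultrafilter K | (∃ ξ < τo, ∃ ζ < κo, G = F ξ ζ) ∧ ∃ t : Finset K, D t ∈ G}

/-- Property (P) of 2.9, for a given partition `D` and `κ`-shrinking function `φ`. -/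
def PropertyP {L : Type} (τo κo : Ordinal.{0}) (F : Ordinal.{0} → Ordinal.{0} → Ultrafilter K)
    (φ : Finset L → Finset K) (D : Finset K → Set K) : Prop :=
  ∀ ν < τo, ∀ μ < κo,
    F ν μ ∉ Wtilde τo κo F (Wzero τo κo F D) →
      ∃ Wf : L → Set K, (∀ η : L, Wf η ∈ F ν μ) ∧
        ∀ p : Finset L,
          Cardinal.mk ↥((⋂ η ∈ p, Wf η) ∩ D (φ p)) < Cardinal.mk K

/-- A stratified set of ultrafilters with uniform predecessor `Fu` (2.10). -/
def UniformPred (τo κo : Ordinal.{0}) (F : Ordinal.{0} → Ordinal.{0} → Ultrafilter K)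
    (Fu : Ultrafilter K) : Prop :=
  Stratified τo κo F ∧
  (∀ (L : Type) (φ : Finset L → Finset K) (D : Finset K → Set K),
      Cardinal.mk L = Order.succ (Cardinal.mk K) → Shrinking φ → IsPartitionFin D →
      PropertyP τo κo F φ D) ∧
  (∀ ξ < τo, ∀ ζ < κo,
      OmegaEq {G : Ultrafilter K | ∃ ν < κo, G = F (ξ + 1) ν} (F ξ ζ) Fu) ∧
  (∀ ξ : Ordinal.{0}, ξ < τo → Order.IsSuccLimit ξ → ∀ ζ < κo,
      OmegaEq {G : Ultrafilter K | ∃ μ < ξ, ∃ ν < κo, G = F μ ν} (F ξ ζ) Fu)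

lemma wIter_zero (τo κo : Ordinal.{0}) (F : Ordinal.{0} → Ordinal.{0} → Ultrafilter K)
    (W0 : Set (Ultrafilter K)) : WIter τo κo F W0 0 = W0 :=
  Ordinal.limitRecOn_zero _ _ _

lemma wIter_succ (τo κo : Ordinal.{0}) (F : Ordinal.{0} → Ordinal.{0} → Ultrafilter K)
    (W0 : Set (Ultrafilter K)) (δ : Ordinal.{0}) :
    WIter τo κo F W0 (Order.succ δ) = WIter τo κo F W0 δ ∪
      {G : Ultrafilter K | (∃ ξ < τo, ∃ ζ < κo, G = F ξ ζ) ∧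
        ∃ η : Ordinal.{0}, δ < η ∧ η < τo ∧ ∃ A ∈ G,
          {H : Ultrafilter K | ∃ ν < κo, H = F η ν ∧ A ∈ F η ν} ⊆ WIter τo κo F W0 δ} :=
  Ordinal.limitRecOn_succ _ _ _ _

lemma wIter_limit (τo κo : Ordinal.{0}) (F : Ordinal.{0} → Ordinal.{0} → Ultrafilter K)
    (W0 : Set (Ultrafilter K)) {γ : Ordinal.{0}} (h : Order.IsSuccLimit γ) :
    WIter τo κo F W0 γ = ⋃ β : Ordinal.{0}, ⋃ _ : β < γ, WIter τo κo F W0 β :=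
  Ordinal.limitRecOn_limit _ _ _ _ h

lemma mem_closure_ultrafilter {T : Set (Ultrafilter K)} {G : Ultrafilter K}
    (h : ∀ B : Set K, B ∈ G → ∃ H ∈ T, B ∈ H) : G ∈ closure T := by
  rw [ultrafilterBasis_is_basis.mem_closure_iff]
  rintro o ⟨B, rfl⟩ hG
  obtain ⟨H, hHT, hBH⟩ := h B hG
  exact ⟨H, hBH, hHT⟩

lemma wIter_subset_one_union (τo κo : Ordinal.{0})
    (F : Ordinal.{0} → Ordinal.{0} → Ultrafilter K) (W0 : Set (Ultrafilter K))
    (γ : Ordinal.{0}) :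
    WIter τo κo F W0 γ ⊆ WIter τo κo F W0 1 ∪ closure (WIter τo κo F W0 1 \ W0) := by
  induction γ using Ordinal.limitRecOn with
  | zero =>
    intro G hG
    rw [wIter_zero] at hG
    left
    rw [show (1 : Ordinal.{0}) = Order.succ 0 from (Ordinal.succ_zero).symm, wIter_succ,
      wIter_zero]
    exact Or.inl hG
  | add_one δ ih =>
    intro G hG
    rw [Ordinal.add_one_eq_succ, wIter_succ] at hG
    rcases hG with hG | ⟨hform, η, hδη, hητ, A, hAG, hsub⟩
    · exact ih hG
    by_cases hbad : ∃ A' ∈ G, ∀ ν < κo, A' ∈ F η ν → F η ν ∈ W0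
    · -- then G ∈ W(1)
      obtain ⟨A', hA'G, hall⟩ := hbad
      left
      rw [show (1 : Ordinal.{0}) = Order.succ 0 from (Ordinal.succ_zero).symm, wIter_succ,
        wIter_zero]
      right
      refine ⟨hform, η, (zero_le (a := δ)).trans_lt hδη, hητ, A', hA'G, ?_⟩
      rintro H ⟨ν, hν, rfl, hmem⟩
      exact hall ν hν hmem
    · push_neg at hbad
      right
      apply mem_closure_ultrafilter
      intro B hBG
      obtain ⟨ν, hν, hmem, hnotW0⟩ := hbad (B ∩ A) (G.toFilter.inter_mem hBG hAG)
      have hBmem : B ∈ F η ν := (F η ν).toFilter.mem_of_superset hmem inter_subset_left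
      have hAmem : A ∈ F η ν := (F η ν).toFilter.mem_of_superset hmem inter_subset_right
      have hδmem : F η ν ∈ WIter τo κo F W0 δ := hsub ⟨ν, hν, rfl, hAmem⟩
      rcases ih hδmem with h1 | hcl
      · exact ⟨F η ν, ⟨h1, hnotW0⟩, hBmem⟩
      · -- F η ν is in the closure; use the basic open set {u | B ∈ u}
        rw [ultrafilterBasis_is_basis.mem_closure_iff] at hcl
        obtain ⟨H, hHB, hHT⟩ := hcl {u : Ultrafilter K | B ∈ u} ⟨B, rfl⟩ hBmem
        exact ⟨H, hHT, hHB⟩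
  | limit γ hlim ih =>
    intro G hG
    rw [wIter_limit _ _ _ _ hlim] at hG
    simp only [Set.mem_iUnion] at hG
    obtain ⟨β, hβ, hGβ⟩ := hG
    exact ih β hβ hGβ


/-- If `Y = {F ξ ζ : ξ, ζ < κ}` is a stratified set of nonprincipal ultrafilters on a
regular `κ`, `{D t : t ∈ [κ]^{<ω}}` is a partition of `κ`, and `W`, `W(γ)`, `W̃` are
defined as in 2.7, then every `F ξ ζ ∈ W̃ ∖ W(1)` lies in the closure of `W(1) ∖ W`
in `βκ`. -/
theorem mem_closure_of_mem_Wtilde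
    (hreg : (Cardinal.mk K).IsRegular)
    (F : Ordinal.{0} → Ordinal.{0} → Ultrafilter K)
    (hnp : ∀ ξ < (Cardinal.mk K).ord, ∀ ζ < (Cardinal.mk K).ord, NonPrincipal (F ξ ζ))
    (hstrat : Stratified (Cardinal.mk K).ord (Cardinal.mk K).ord F)
    (D : Finset K → Set K) (hD : IsPartitionFin D) :
    ∀ ξ < (Cardinal.mk K).ord, ∀ ζ < (Cardinal.mk K).ord,
      F ξ ζ ∈ Wtilde (Cardinal.mk K).ord (Cardinal.mk K).ord F
          (Wzero (Cardinal.mk K).ord (Cardinal.mk K).ord F D) →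
      F ξ ζ ∉ WIter (Cardinal.mk K).ord (Cardinal.mk K).ord F
          (Wzero (Cardinal.mk K).ord (Cardinal.mk K).ord F D) 1 →
      F ξ ζ ∈ closure
          (WIter (Cardinal.mk K).ord (Cardinal.mk K).ord F
              (Wzero (Cardinal.mk K).ord (Cardinal.mk K).ord F D) 1 \
            Wzero (Cardinal.mk K).ord (Cardinal.mk K).ord F D) := by
  intro ξ hξ ζ hζ hWt hnot1
  simp only [Wtilde, Set.mem_iUnion] at hWt
  obtain ⟨γ, hγ, hmem⟩ := hWt
  rcases wIter_subset_one_union _ _ F _ γ hmem with h1 | hcl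
  · exact absurd h1 hnot1
  · exact hcl

end RFNote
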